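/- Let V be a 2×2 complex unitary matrix and σ_Z = !![1,0; 0,−1]. Then trace(Vᴴ · σ_Z · V · σ_Z) = 0 if and only if |V₀₀|² = 1/2 (where V₀₀ is the top-left entry of V); in that case all four entries of V have absolute value 1/√2. -/

import Mathlib

open Matrix

/-- For a unitary `2×2` matrix `V` and `σ_Z = !![1,0;0,−1]`, one has
`tr(Vᴴ σ_Z V σ_Z) = 0` iff `|V₀₀|² = 1/2`, and in that case all four entries of `V` have
absolute value `1/√2`. -/
theorem trace_sigmaZ_conj_eq_zero_iff (V : Matrix (Fin 2) (Fin 2) ℂ)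
    (hV : V ∈ Matrix.unitaryGroup (Fin 2) ℂ) :
    (Matrix.trace (Vᴴ * !![(1 : ℂ), 0; 0, -1] * V * !![(1 : ℂ), 0; 0, -1]) = 0
        ↔ ‖V 0 0‖ ^ 2 = 1 / 2)
      ∧ (Matrix.trace (Vᴴ * !![(1 : ℂ), 0; 0, -1] * V * !![(1 : ℂ), 0; 0, -1]) = 0 →
          ∀ i j : Fin 2, ‖V i j‖ = 1 / Real.sqrt 2) := by
  have h1 : Vᴴ * V = 1 := hV.1
  have h2 : V * Vᴴ = 1 := hV.2
  have h00 := congrFun (congrFun h1 0) 0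
  have h11 := congrFun (congrFun h1 1) 1
  have k00 := congrFun (congrFun h2 0) 0
  simp only [Matrix.mul_apply, Fin.sum_univ_two, Matrix.one_apply_eq,
    Matrix.conjTranspose_apply, Complex.star_def, ← Complex.normSq_eq_conj_mul_self,
    mul_comm _ ((starRingEnd ℂ) _)] at h00 h11 k00
  -- real unitarity relations
  have H00 : Complex.normSq (V 0 0) + Complex.normSq (V 1 0) = 1 := by
    exact_mod_cast h00
  have H11 : Complex.normSq (V 0 1) + Complex.normSq (V 1 1) = 1 := by
    exact_mod_cast h11
  have K00 : Complex.normSq (V 0 0) + Complex.normSq (V 0 1) = 1 := by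
    exact_mod_cast k00
  -- trace formula
  have T : Matrix.trace (Vᴴ * !![(1 : ℂ), 0; 0, -1] * V * !![(1 : ℂ), 0; 0, -1])
      = ((Complex.normSq (V 0 0) - Complex.normSq (V 0 1)
          - Complex.normSq (V 1 0) + Complex.normSq (V 1 1) : ℝ) : ℂ) := by
    simp [Matrix.trace, Matrix.mul_apply, Fin.sum_univ_two, Matrix.conjTranspose_apply,
      ← Complex.normSq_eq_conj_mul_self]
    ring
  have Tiff : Matrix.trace (Vᴴ * !![(1 : ℂ), 0; 0, -1] * V * !![(1 : ℂ), 0; 0, -1]) = 0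
      ↔ Complex.normSq (V 0 0) = 1 / 2 := by
    rw [T, Complex.ofReal_eq_zero]
    constructor
    · intro h; linarith
    · intro h; linarith
  have habs : ∀ i j : Fin 2, Complex.normSq (V i j) = 1 / 2 →
      ‖V i j‖ = 1 / Real.sqrt 2 := by
    intro i j h
    rw [Complex.norm_def, h, show (1 : ℝ) / 2 = (1 / Real.sqrt 2) ^ 2 by
      rw [div_pow, one_pow, Real.sq_sqrt (by norm_num)]]
    exact Real.sqrt_sq (by positivity)
  refine ⟨Tiff.trans (by rw [Complex.sq_norm]), ?_⟩
  intro hT i j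
  have h0 : Complex.normSq (V 0 0) = 1 / 2 := Tiff.mp hT
  apply habs
  fin_cases i <;> fin_cases j <;> simp <;> linarith
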